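/- The ℤ_3 polygon action S[g] = (1/2)(a₀/a₁ + a₁/a₂ + a₂/a₀ − a₀²/a₂² − a₂²/a₁² − a₁²/a₀²) is scale invariant: S[λa₀, λa₁, λa₂] = S[a₀, a₁, a₂] for all λ > 0, and S is maximized (with value 0) exactly when a₀ = a₁ = a₂. -/

import Mathlib

lemma z3_key (a0 a1 a2 : ℝ) (h0 : 0 < a0) (h1 : 0 < a1) (h2 : 0 < a2) :
    (1 / 2) * (a0 / a1 + a1 / a2 + a2 / a0
        - a0 ^ 2 / a2 ^ 2 - a2 ^ 2 / a1 ^ 2 - a1 ^ 2 / a0 ^ 2) =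
    -(1/4) * ((a0/a2 - a2/a1)^2 + (a2/a1 - a1/a0)^2 + (a1/a0 - a0/a2)^2) := by
  field_simp
  ring

/-- The `ℤ_3` polygon action
`S(a₀,a₁,a₂) = (1/2)(a₀/a₁ + a₁/a₂ + a₂/a₀ − a₀²/a₂² − a₂²/a₁² − a₁²/a₀²)`
is scale invariant and is maximized (with value 0) exactly at `a₀ = a₁ = a₂`. -/
theorem z3_action_scale_invariant_and_maximized
    (S : ℝ → ℝ → ℝ → ℝ)
    (hS : ∀ a0 a1 a2 : ℝ, S a0 a1 a2 =
      (1 / 2) * (a0 / a1 + a1 / a2 + a2 / a0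
        - a0 ^ 2 / a2 ^ 2 - a2 ^ 2 / a1 ^ 2 - a1 ^ 2 / a0 ^ 2)) :
    (∀ a0 a1 a2 lam : ℝ, 0 < a0 → 0 < a1 → 0 < a2 → 0 < lam →
      S (lam * a0) (lam * a1) (lam * a2) = S a0 a1 a2) ∧
    (∀ a0 a1 a2 : ℝ, 0 < a0 → 0 < a1 → 0 < a2 → S a0 a1 a2 ≤ 0) ∧
    (∀ a0 a1 a2 : ℝ, 0 < a0 → 0 < a1 → 0 < a2 →
      (S a0 a1 a2 = 0 ↔ a0 = a1 ∧ a1 = a2)) := by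
  refine ⟨?_, ?_, ?_⟩
  · intro a0 a1 a2 lam h0 h1 h2 hl
    rw [hS, hS]
    field_simp
  · intro a0 a1 a2 h0 h1 h2
    rw [hS, z3_key a0 a1 a2 h0 h1 h2]
    nlinarith [sq_nonneg (a0/a2 - a2/a1), sq_nonneg (a2/a1 - a1/a0), sq_nonneg (a1/a0 - a0/a2)]
  · intro a0 a1 a2 h0 h1 h2
    rw [hS, z3_key a0 a1 a2 h0 h1 h2]
    constructor
    · intro h
      have e1 : a0/a2 - a2/a1 = 0 := by
        nlinarith [sq_nonneg (a0/a2 - a2/a1), sq_nonneg (a2/a1 - a1/a0),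
          sq_nonneg (a1/a0 - a0/a2)]
      have e2 : a2/a1 - a1/a0 = 0 := by
        nlinarith [sq_nonneg (a0/a2 - a2/a1), sq_nonneg (a2/a1 - a1/a0),
          sq_nonneg (a1/a0 - a0/a2)]
      have f1 : a0 * a1 = a2 * a2 := by
        field_simp at e1; linarith
      have f2 : a2 * a0 = a1 * a1 := by
        field_simp at e2; linarith
      have h12 : a1 = a2 := by nlinarith
      have h01 : a0 = a1 := by nlinarith
      exact ⟨h01, h12⟩
    · rintro ⟨rfl, rfl⟩
      simp
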